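/- A graph G is (bull, claw, P_5)-free if and only if every connected component of G is 3P_1-free (i.e., has independence number at most 2). -/

import Mathlib

variable {V : Type*}

/-- The bull: a triangle `0,1,2` with pendant vertices `3` (attached to `0`) and
`4` (attached to `1`). -/
def bull : SimpleGraph (Fin 5) :=
  SimpleGraph.fromEdgeSet {s(0,1), s(1,2), s(0,2), s(0,3), s(1,4)}

/-- The claw `K_{1,3}`. -/
def claw : SimpleGraph (Fin 4) := SimpleGraph.fromEdgeSet {s(0,1), s(0,2), s(0,3)}

/-- `3P_1`: the edgeless graph on three vertices. -/
def threeP1 : SimpleGraph (Fin 3) := ⊥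

section Helpers

variable {G : SimpleGraph V} {u v : V}

lemma noClaw (h : IsEmpty (claw ↪g G)) {a b c d : V}
    (hab : G.Adj a b) (hac : G.Adj a c) (had : G.Adj a d)
    (hbc : ¬G.Adj b c) (hbd : ¬G.Adj b d) (hcd : ¬G.Adj c d)
    (nbc : b ≠ c) (nbd : b ≠ d) (ncd : c ≠ d) : False := by
  have nab := hab.ne
  have nac := hac.ne
  have nad := had.ne
  have hba := hab.symm
  have hca := hac.symm
  have hda := had.symm
  have hcb : ¬G.Adj c b := fun h' => hbc h'.symm
  have hdb : ¬G.Adj d b := fun h' => hbd h'.symm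
  have hdc : ¬G.Adj d c := fun h' => hcd h'.symm
  have haa : ¬G.Adj a a := G.irrefl
  have hbb : ¬G.Adj b b := G.irrefl
  have hcc : ¬G.Adj c c := G.irrefl
  have hdd : ¬G.Adj d d := G.irrefl
  refine h.elim ⟨⟨![a,b,c,d], ?_⟩, ?_⟩
  · intro i j hij
    fin_cases i <;> fin_cases j <;> simp_all
  · intro i j
    fin_cases i <;> fin_cases j <;>
      simp [claw, SimpleGraph.fromEdgeSet_adj, Sym2.eq_iff] <;> tauto

lemma noBull (h : IsEmpty (bull ↪g G)) {v0 v1 v2 v3 v4 : V}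
    (h01 : G.Adj v0 v1) (h12 : G.Adj v1 v2) (h02 : G.Adj v0 v2)
    (h03 : G.Adj v0 v3) (h14 : G.Adj v1 v4)
    (n04 : ¬G.Adj v0 v4) (n13 : ¬G.Adj v1 v3) (n23 : ¬G.Adj v2 v3)
    (n24 : ¬G.Adj v2 v4) (n34 : ¬G.Adj v3 v4)
    (e04 : v0 ≠ v4) (e13 : v1 ≠ v3) (e23 : v2 ≠ v3) (e24 : v2 ≠ v4) (e34 : v3 ≠ v4) : False := by
  have e01 := h01.ne; have e12 := h12.ne; have e02 := h02.ne
  have e03 := h03.ne; have e14 := h14.ne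
  have h10 := h01.symm; have h21 := h12.symm; have h20 := h02.symm
  have h30 := h03.symm; have h41 := h14.symm
  have n40 : ¬G.Adj v4 v0 := fun h' => n04 h'.symm
  have n31 : ¬G.Adj v3 v1 := fun h' => n13 h'.symm
  have n32 : ¬G.Adj v3 v2 := fun h' => n23 h'.symm
  have n42 : ¬G.Adj v4 v2 := fun h' => n24 h'.symm
  have n43 : ¬G.Adj v4 v3 := fun h' => n34 h'.symm
  have i0 : ¬G.Adj v0 v0 := G.irrefl
  have i1 : ¬G.Adj v1 v1 := G.irrefl
  have i2 : ¬G.Adj v2 v2 := G.irrefl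
  have i3 : ¬G.Adj v3 v3 := G.irrefl
  have i4 : ¬G.Adj v4 v4 := G.irrefl
  refine h.elim ⟨⟨![v0,v1,v2,v3,v4], ?_⟩, ?_⟩
  · intro i j hij
    fin_cases i <;> fin_cases j <;> simp_all
  · intro i j
    fin_cases i <;> fin_cases j <;>
      simp [bull, SimpleGraph.fromEdgeSet_adj, Sym2.eq_iff] <;> tauto

lemma noP5 (h : IsEmpty (SimpleGraph.pathGraph 5 ↪g G)) {v0 v1 v2 v3 v4 : V}
    (h01 : G.Adj v0 v1) (h12 : G.Adj v1 v2) (h23 : G.Adj v2 v3) (h34 : G.Adj v3 v4)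
    (n02 : ¬G.Adj v0 v2) (n03 : ¬G.Adj v0 v3) (n04 : ¬G.Adj v0 v4)
    (n13 : ¬G.Adj v1 v3) (n14 : ¬G.Adj v1 v4) (n24 : ¬G.Adj v2 v4)
    (e02 : v0 ≠ v2) (e03 : v0 ≠ v3) (e04 : v0 ≠ v4)
    (e13 : v1 ≠ v3) (e14 : v1 ≠ v4) (e24 : v2 ≠ v4) : False := by
  have e01 := h01.ne; have e12 := h12.ne; have e23 := h23.ne; have e34 := h34.ne
  have h10 := h01.symm; have h21 := h12.symm; have h32 := h23.symm; have h43 := h34.symm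
  have n20 : ¬G.Adj v2 v0 := fun h' => n02 h'.symm
  have n30 : ¬G.Adj v3 v0 := fun h' => n03 h'.symm
  have n40 : ¬G.Adj v4 v0 := fun h' => n04 h'.symm
  have n31 : ¬G.Adj v3 v1 := fun h' => n13 h'.symm
  have n41 : ¬G.Adj v4 v1 := fun h' => n14 h'.symm
  have n42 : ¬G.Adj v4 v2 := fun h' => n24 h'.symm
  have i0 : ¬G.Adj v0 v0 := G.irrefl
  have i1 : ¬G.Adj v1 v1 := G.irrefl
  have i2 : ¬G.Adj v2 v2 := G.irrefl
  have i3 : ¬G.Adj v3 v3 := G.irrefl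
  have i4 : ¬G.Adj v4 v4 := G.irrefl
  refine h.elim ⟨⟨![v0,v1,v2,v3,v4], ?_⟩, ?_⟩
  · intro i j hij
    fin_cases i <;> fin_cases j <;> simp_all
  · intro i j
    fin_cases i <;> fin_cases j <;>
      simp [SimpleGraph.pathGraph_adj] <;> tauto

lemma walk_to_getVert (w : G.Walk u v) (i : ℕ) :
    ∃ p : G.Walk u (w.getVert i), p.length ≤ i := by
  induction w generalizing i with
  | nil => exact ⟨SimpleGraph.Walk.nil.copy rfl (by simp [SimpleGraph.Walk.getVert]), by simp⟩
  | cons h q ih =>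
    cases i with
    | zero => exact ⟨SimpleGraph.Walk.nil.copy rfl (by simp), by simp⟩
    | succ i =>
      obtain ⟨p, hp⟩ := ih i
      exact ⟨(SimpleGraph.Walk.cons h p).copy rfl (by simp [SimpleGraph.Walk.getVert_cons_succ]),
        by simpa using Nat.succ_le_succ hp⟩

lemma walk_from_getVert (w : G.Walk u v) (i : ℕ) :
    ∃ p : G.Walk (w.getVert i) v, p.length ≤ w.length - i := by
  induction w generalizing i with
  | nil => exact ⟨SimpleGraph.Walk.nil.copy (by simp [SimpleGraph.Walk.getVert]) rfl, by simp⟩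
  | cons h q ih =>
    cases i with
    | zero =>
      exact ⟨(SimpleGraph.Walk.cons h q).copy (by simp) rfl, by simp⟩
    | succ i =>
      obtain ⟨p, hp⟩ := ih i
      refine ⟨p.copy (by simp [SimpleGraph.Walk.getVert_cons_succ]) rfl, ?_⟩
      simp only [SimpleGraph.Walk.length_copy, SimpleGraph.Walk.length_cons]
      refine le_trans (le_of_eq (SimpleGraph.Walk.length_copy _ _ _)) ?_; omega

lemma dist_to_getVert (w : G.Walk u v) (i : ℕ) : G.dist u (w.getVert i) ≤ i := by
  obtain ⟨p, hp⟩ := walk_to_getVert w i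
  exact le_trans (SimpleGraph.dist_le p) hp

lemma geodesic_ne (w : G.Walk u v) (hmin : w.length = G.dist u v) {i j : ℕ}
    (hij : i < j) (hj : j ≤ w.length) : w.getVert i ≠ w.getVert j := by
  intro heq
  obtain ⟨p, hp⟩ := walk_to_getVert w i
  obtain ⟨q, hq⟩ := walk_from_getVert w j
  have := SimpleGraph.dist_le (p.append (q.copy heq.symm rfl))
  simp only [SimpleGraph.Walk.length_append, SimpleGraph.Walk.length_copy] at this
  omega

lemma geodesic_not_adj (w : G.Walk u v) (hmin : w.length = G.dist u v) {i j : ℕ}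
    (hij : i + 2 ≤ j) (hj : j ≤ w.length) : ¬G.Adj (w.getVert i) (w.getVert j) := by
  intro hadj
  obtain ⟨p, hp⟩ := walk_to_getVert w i
  obtain ⟨q, hq⟩ := walk_from_getVert w j
  have := SimpleGraph.dist_le (p.append (SimpleGraph.Walk.cons hadj q))
  simp only [SimpleGraph.Walk.length_append, SimpleGraph.Walk.length_cons] at this
  omega

set_option maxHeartbeats 1600000 in
lemma lemL (hb : IsEmpty (bull ↪g G)) (hc : IsEmpty (claw ↪g G))
    (hp : IsEmpty (SimpleGraph.pathGraph 5 ↪g G)) {x y z : V}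
    (hxy : ¬G.Adj x y) (hxz : ¬G.Adj x z) (hyz : ¬G.Adj y z)
    (nxy : x ≠ y) (nxz : x ≠ z) (nyz : y ≠ z)
    (rxz : G.Reachable x z) (rxy : G.Reachable x y)
    (hnc : ¬∃ w, G.Adj w x ∧ G.Adj w z) : False := by
  classical
  obtain ⟨w, hwd⟩ := rxz.exists_walk_length_eq_dist
  have hmin : w.length = G.dist x z := hwd
  -- the length is at least 3
  have h0 : w.length ≠ 0 := by
    intro h0
    have hz := w.getVert_length
    rw [h0] at hz
    exact nxz ((w.getVert_zero).symm.trans hz)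
  have h1 : w.length ≠ 1 := by
    intro h1
    have := w.adj_getVert_succ (i := 0) (by omega)
    rw [w.getVert_zero, show (0 + 1 : ℕ) = w.length by omega, w.getVert_length] at this
    exact hxz this
  have h2 : w.length ≠ 2 := by
    intro h2
    have ha := w.adj_getVert_succ (i := 0) (by omega)
    have hb' := w.adj_getVert_succ (i := 1) (by omega)
    rw [w.getVert_zero] at ha
    rw [show (1 + 1 : ℕ) = w.length by omega, w.getVert_length] at hb'
    exact hnc ⟨w.getVert 1, ha.symm, hb'⟩
  have h4 : ¬(4 ≤ w.length) := by
    intro h4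
    exact noP5 hp (w.adj_getVert_succ (i := 0) (by omega)) (w.adj_getVert_succ (i := 1) (by omega))
      (w.adj_getVert_succ (i := 2) (by omega)) (w.adj_getVert_succ (i := 3) (by omega))
      (geodesic_not_adj w hmin (i := 0) (j := 2) (by omega) (by omega))
      (geodesic_not_adj w hmin (i := 0) (j := 3) (by omega) (by omega))
      (geodesic_not_adj w hmin (i := 0) (j := 4) (by omega) (by omega))
      (geodesic_not_adj w hmin (i := 1) (j := 3) (by omega) (by omega))
      (geodesic_not_adj w hmin (i := 1) (j := 4) (by omega) (by omega))
      (geodesic_not_adj w hmin (i := 2) (j := 4) (by omega) (by omega))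
      (geodesic_ne w hmin (i := 0) (j := 2) (by omega) (by omega))
      (geodesic_ne w hmin (i := 0) (j := 3) (by omega) (by omega))
      (geodesic_ne w hmin (i := 0) (j := 4) (by omega) (by omega))
      (geodesic_ne w hmin (i := 1) (j := 3) (by omega) (by omega))
      (geodesic_ne w hmin (i := 1) (j := 4) (by omega) (by omega))
      (geodesic_ne w hmin (i := 2) (j := 4) (by omega) (by omega))
  have hlen : w.length = 3 := by omega
  set c := w.getVert 1 with hcdef
  set b := w.getVert 2 with hbdef
  have axc : G.Adj x c := by
    have := w.adj_getVert_succ (i := 0) (by omega)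
    rwa [w.getVert_zero] at this
  have acb : G.Adj c b := w.adj_getVert_succ (i := 1) (by omega)
  have abz : G.Adj b z := by
    have := w.adj_getVert_succ (i := 2) (by omega)
    rwa [show (2 + 1 : ℕ) = w.length by omega, w.getVert_length] at this
  have nxb : ¬G.Adj x b := by
    have := geodesic_not_adj w hmin (i := 0) (j := 2) (by omega) (by omega)
    rwa [w.getVert_zero] at this
  have ncz : ¬G.Adj c z := by
    have := geodesic_not_adj w hmin (i := 1) (j := 3) (by omega) (by omega)
    rwa [show (3 : ℕ) = w.length by omega, w.getVert_length] at this
  have exb : x ≠ b := by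
    have := geodesic_ne w hmin (i := 0) (j := 2) (by omega) (by omega)
    rwa [w.getVert_zero] at this
  have ecz : c ≠ z := by
    have := geodesic_ne w hmin (i := 1) (j := 3) (by omega) (by omega)
    rwa [show (3 : ℕ) = w.length by omega, w.getVert_length] at this
  have exc : x ≠ c := axc.ne
  have ecb : c ≠ b := acb.ne
  have ebz : b ≠ z := abz.ne
  -- y is not adjacent to b or c
  have hyb : ¬G.Adj y b := by
    intro hyb
    by_cases hyc : G.Adj y c
    · exact noBull hb acb.symm hyc.symm hyb.symm abz axc.symm
        (fun h => nxb h.symm) ncz hyz (fun h => hxy h.symm) (fun h => hxz h.symm)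
        exb.symm ecz nyz nxy.symm nxz.symm
    · exact noClaw hc acb.symm hyb.symm abz (fun h => hyc h.symm) ncz hyz
        (fun h => hxy (by rw [← h]; exact axc)) ecz nyz
  have hyc : ¬G.Adj y c := by
    intro hyc
    exact noClaw hc acb axc.symm hyc.symm (fun h => nxb h.symm) (fun h => hyb h.symm) hxy
      exb.symm (fun h => hyz (by rw [← h]; exact abz)) nxy
  have eyb : y ≠ b := fun h => hyz (by rw [h]; exact abz)
  have eyc : y ≠ c := fun h => hxy (by rw [h]; exact axc)
  -- reachability from y
  have ryx : G.Reachable y x := rxy.symm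
  have ryc : G.Reachable y c := ryx.trans axc.reachable
  have ryb : G.Reachable y b := ryc.trans acb.reachable
  have ryz : G.Reachable y z := ryx.trans rxz
  -- distances
  set Dx := G.dist y x with hDx
  set Db := G.dist y b with hDb
  set Dc := G.dist y c with hDc
  set Dz := G.dist y z with hDz
  have twole : ∀ s : V, y ≠ s → ¬G.Adj y s → G.Reachable y s → 2 ≤ G.dist y s := by
    intro s hne hna hr
    have hpos := hr.pos_dist_of_ne hne
    have hone : G.dist y s ≠ 1 := fun h => hna (SimpleGraph.dist_eq_one_iff_adj.mp h)
    omega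
  have h2x : 2 ≤ Dx := twole x nxy.symm (fun h => hxy h.symm) ryx
  have h2b : 2 ≤ Db := twole b eyb hyb ryb
  have h2c : 2 ≤ Dc := twole c eyc hyc ryc
  have h2z : 2 ≤ Dz := twole z nyz hyz ryz
  set D := min (min Dx Db) (min Dc Dz) with hD
  have hDlex : D ≤ Dx := le_trans (min_le_left _ _) (min_le_left _ _)
  have hDleb : D ≤ Db := le_trans (min_le_left _ _) (min_le_right _ _)
  have hDlec : D ≤ Dc := le_trans (min_le_right _ _) (min_le_left _ _)
  have hDlez : D ≤ Dz := le_trans (min_le_right _ _) (min_le_right _ _)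
  have hD2 : 2 ≤ D := le_min (le_min h2x h2b) (le_min h2c h2z)
  have key : ∀ s0 : V, G.Reachable y s0 → G.dist y s0 = D →
      ∃ u v' : V, G.Adj v' u ∧ G.Adj u s0 ∧
        u ≠ x ∧ u ≠ b ∧ u ≠ c ∧ u ≠ z ∧
        ¬G.Adj v' x ∧ ¬G.Adj v' b ∧ ¬G.Adj v' c ∧ ¬G.Adj v' z ∧
        v' ≠ x ∧ v' ≠ b ∧ v' ≠ c ∧ v' ≠ z := by
    intro s0 hr hds
    obtain ⟨q, hq⟩ := hr.exists_walk_length_eq_dist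
    have hql : q.length = D := by rw [hq, hds]
    refine ⟨q.getVert (D - 1), q.getVert (D - 2), ?_, ?_, ?_, ?_, ?_, ?_, ?_, ?_, ?_, ?_, ?_, ?_, ?_, ?_⟩
    · have := q.adj_getVert_succ (i := D - 2) (by omega)
      rwa [show D - 2 + 1 = D - 1 by omega] at this
    · have := q.adj_getVert_succ (i := D - 1) (by omega)
      rwa [show D - 1 + 1 = D by omega, show q.getVert D = s0 by
        rw [← hql]; exact q.getVert_length] at this
    all_goals {
      first
      | (intro heq
         have hle := dist_to_getVert q (D - 1)
         rw [heq] at hle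
         omega)
      | (intro hadj
         obtain ⟨p, hp⟩ := walk_to_getVert q (D - 2)
         have hle := SimpleGraph.dist_le (p.concat hadj)
         rw [SimpleGraph.Walk.length_concat] at hle
         omega)
      | (intro heq
         have hle := dist_to_getVert q (D - 2)
         rw [heq] at hle
         omega)
    }
    -- pick the closest vertex of the path to y
  have hs0 : ∃ s0 : V, G.Reachable y s0 ∧ G.dist y s0 = D ∧
      (s0 = x ∨ s0 = b ∨ s0 = c ∨ s0 = z) := by
    rcases min_choice (min Dx Db) (min Dc Dz) with h | h
    · rcases min_choice Dx Db with h2 | h2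
      · exact ⟨x, ryx, by rw [hD, h, h2], Or.inl rfl⟩
      · exact ⟨b, ryb, by rw [hD, h, h2], Or.inr (Or.inl rfl)⟩
    · rcases min_choice Dc Dz with h2 | h2
      · exact ⟨c, ryc, by rw [hD, h, h2], Or.inr (Or.inr (Or.inl rfl))⟩
      · exact ⟨z, ryz, by rw [hD, h, h2], Or.inr (Or.inr (Or.inr rfl))⟩
  obtain ⟨s0, hrs0, hds0, hmem⟩ := hs0
  obtain ⟨u, v', hvu, hus, hux, hub, huc, huz, hvx, hvb, hvc, hvz, hvex, hveb, hvec, hvez⟩ :=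
    key s0 hrs0 hds0
  have hone : G.Adj u x ∨ G.Adj u b ∨ G.Adj u c ∨ G.Adj u z := by
    rcases hmem with rfl | rfl | rfl | rfl <;> tauto
  by_cases X : G.Adj u x <;> by_cases A : G.Adj u z
  · -- both: common neighbor of x and z
    exact hnc ⟨u, X, A⟩
  · -- X, ¬A
    by_cases B : G.Adj u b <;> by_cases C : G.Adj u c
    · -- claw at u with leaves x, b, v'
      exact noClaw hc X B hvu.symm nxb (fun h => hvx h.symm) (fun h => hvb h.symm)
        exb hvex.symm hveb.symm
    · -- B, ¬C : claw at b with leaves z, c, u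
      exact noClaw hc abz acb.symm B.symm (fun h => ncz h.symm) (fun h => A h.symm)
        (fun h => C h.symm) ecz.symm huz.symm huc.symm
    · -- ¬B, C : bull u,c,x with pendants v' (at u) and b (at c)
      exact noBull hb C axc.symm X hvu.symm acb B (fun h => hvc h.symm) (fun h => hvx h.symm)
        nxb hvb hub hvec.symm hvex.symm exb hveb
    · -- ¬B, ¬C : P5 v'-u-x-c-b
      exact noP5 hp hvu X axc acb hvx hvc hvb C B nxb hvex hvec hveb huc hub exb
  · -- ¬X, A
    by_cases B : G.Adj u b <;> by_cases C : G.Adj u c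
    · -- claw at u with leaves z, c, v'
      exact noClaw hc A C hvu.symm (fun h => ncz h.symm) (fun h => hvz h.symm)
        (fun h => hvc h.symm) ecz.symm hvez.symm hvec.symm
    · -- B, ¬C : bull u,b,z with pendants v' (at u) and c (at b)
      exact noBull hb B abz A hvu.symm acb.symm C (fun h => hvb h.symm) (fun h => hvz h.symm)
        (fun h => ncz h.symm) hvc huc hveb.symm hvez.symm ecz.symm hvec
    · -- ¬B, C : claw at c with leaves b, x, u
      exact noClaw hc acb axc.symm C.symm (fun h => nxb h.symm) (fun h => B h.symm)
        (fun h => X h.symm) exb.symm hub.symm hux.symm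
    · -- ¬B, ¬C : P5 v'-u-z-b-c
      exact noP5 hp hvu A abz.symm acb.symm hvz hvb hvc B C (fun h => ncz h.symm)
        hvez hveb hvec hub huc ecz.symm
  · -- ¬X, ¬A
    by_cases B : G.Adj u b <;> by_cases C : G.Adj u c
    · -- bull b,c,u with pendants z (at b) and x (at c)
      exact noBull hb acb.symm C.symm B.symm abz axc.symm (fun h => nxb h.symm) ncz A X
        (fun h => hxz h.symm) exb.symm ecz huz hux nxz.symm
    · -- B, ¬C : claw at b with leaves z, c, u
      exact noClaw hc abz acb.symm B.symm (fun h => ncz h.symm) (fun h => A h.symm)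
        (fun h => C h.symm) ecz.symm huz.symm huc.symm
    · -- ¬B, C : claw at c with leaves b, x, u
      exact noClaw hc acb axc.symm C.symm (fun h => nxb h.symm) (fun h => B h.symm)
        (fun h => X h.symm) exb.symm hub.symm hux.symm
    · tauto

lemma mainLem (hb : IsEmpty (bull ↪g G)) (hc : IsEmpty (claw ↪g G))
    (hp : IsEmpty (SimpleGraph.pathGraph 5 ↪g G)) {x y z : V}
    (hxy : ¬G.Adj x y) (hxz : ¬G.Adj x z) (hyz : ¬G.Adj y z)
    (nxy : x ≠ y) (nxz : x ≠ z) (nyz : y ≠ z)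
    (rxy : G.Reachable x y) (rxz : G.Reachable x z) : False := by
  by_cases h : ∃ w, G.Adj w x ∧ G.Adj w z
  · obtain ⟨a, hax, haz⟩ := h
    have hay : ¬G.Adj a y := fun hay =>
      noClaw hc hax hay haz hxy hxz hyz nxy nxz nyz
    have hno : ¬∃ w, G.Adj w x ∧ G.Adj w y := by
      rintro ⟨b, hbx, hby⟩
      have hbz : ¬G.Adj b z := fun hbz => noClaw hc hbx hby hbz hxy hxz hyz nxy nxz nyz
      by_cases hba : G.Adj b a
      · -- bull: triangle a,b,x with pendants z (at a) and y (at b)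
        exact noBull hb hba.symm hbx hax haz hby hay hbz hxz hxy
          (fun h' => hyz h'.symm)
          (fun h' => hyz (by rw [← h']; exact haz))
          (fun h' => hxz (by rw [← h']; exact hbx.symm))
          nxz nxy nyz.symm
      · -- P5: y-b-x-a-z
        exact noP5 hp hby.symm hbx hax.symm haz
          (fun h' => hxy h'.symm) (fun h' => hay h'.symm) hyz hba hbz hxz
          nxy.symm (fun h' => hxy (by rw [h']; exact hax.symm)) nyz
          (fun h' => hay (by rw [← h']; exact hby)) (fun h' => hxz (by rw [← h']; exact hbx.symm))
          nxz
    exact lemL hb hc hp hxz hxy (fun h' => hyz h'.symm) nxz nxy nyz.symm rxy rxz hno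
  · exact lemL hb hc hp hxy hxz hyz nxy nxz nyz rxz rxy h

lemma triple_to_comp (h : ∀ c : G.ConnectedComponent, IsEmpty (threeP1 ↪g G.induce c.supp))
    {x y z : V} (hxy : ¬G.Adj x y) (hxz : ¬G.Adj x z) (hyz : ¬G.Adj y z)
    (nxy : x ≠ y) (nxz : x ≠ z) (nyz : y ≠ z)
    (rxy : G.Reachable x y) (rxz : G.Reachable x z) : False := by
  classical
  set c := G.connectedComponentMk x with hc
  have hx : x ∈ c.supp := by
    rw [SimpleGraph.ConnectedComponent.mem_supp_iff]
  have hy : y ∈ c.supp := by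
    rw [SimpleGraph.ConnectedComponent.mem_supp_iff, hc]
    exact SimpleGraph.ConnectedComponent.sound rxy.symm
  have hz : z ∈ c.supp := by
    rw [SimpleGraph.ConnectedComponent.mem_supp_iff, hc]
    exact SimpleGraph.ConnectedComponent.sound rxz.symm
  have hyx : ¬G.Adj y x := fun h' => hxy h'.symm
  have hzx : ¬G.Adj z x := fun h' => hxz h'.symm
  have hzy : ¬G.Adj z y := fun h' => hyz h'.symm
  have ixx : ¬G.Adj x x := G.irrefl
  have iyy : ¬G.Adj y y := G.irrefl
  have izz : ¬G.Adj z z := G.irrefl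
  refine (h c).elim ⟨⟨![⟨x, hx⟩, ⟨y, hy⟩, ⟨z, hz⟩], ?_⟩, ?_⟩
  · intro i j hij
    fin_cases i <;> fin_cases j <;> simp_all [Subtype.mk.injEq]
  · intro i j
    fin_cases i <;> fin_cases j <;>
      simp [threeP1, SimpleGraph.comap_adj] <;> tauto

end Helpers

/-- A graph is (bull, claw, `P_5`)-free if and only if every connected component is
`3P_1`-free. -/
theorem bull_claw_P5_free_iff (G : SimpleGraph V) :
    (IsEmpty (bull ↪g G) ∧ IsEmpty (claw ↪g G) ∧
      IsEmpty (SimpleGraph.pathGraph 5 ↪g G)) ↔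
    ∀ c : G.ConnectedComponent, IsEmpty (threeP1 ↪g G.induce c.supp) := by
  constructor
  · rintro ⟨hb, hc, hp⟩ c
    constructor
    intro e
    have adj_iff : ∀ i j : Fin 3, ¬G.Adj ↑(e i) ↑(e j) := by
      intro i j h
      have : threeP1.Adj i j := e.map_rel_iff.mp h
      simp [threeP1] at this
    have ne_iff : ∀ i j : Fin 3, i ≠ j → (↑(e i) : V) ≠ ↑(e j) := by
      intro i j hij h
      exact hij (e.injective (Subtype.ext h))
    have mem : ∀ i : Fin 3, G.connectedComponentMk ↑(e i) = c := fun i =>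
      (SimpleGraph.ConnectedComponent.mem_supp_iff _ _).mp (e i).2
    have r01 : G.Reachable ↑(e 0) ↑(e 1) :=
      SimpleGraph.ConnectedComponent.exact ((mem 0).trans (mem 1).symm)
    have r02 : G.Reachable ↑(e 0) ↑(e 2) :=
      SimpleGraph.ConnectedComponent.exact ((mem 0).trans (mem 2).symm)
    exact mainLem hb hc hp (adj_iff 0 1) (adj_iff 0 2) (adj_iff 1 2)
      (ne_iff 0 1 (by decide)) (ne_iff 0 2 (by decide)) (ne_iff 1 2 (by decide)) r01 r02
  · intro h
    refine ⟨⟨fun e => ?_⟩, ⟨fun e => ?_⟩, ⟨fun e => ?_⟩⟩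
    · -- bull : independent set {2, 3, 4}
      have adj : ∀ i j : Fin 5, bull.Adj i j → G.Adj (e i) (e j) := fun i j hij =>
        e.map_rel_iff.mpr hij
      have nadj : ∀ i j : Fin 5, ¬bull.Adj i j → ¬G.Adj (e i) (e j) := fun i j hij h' =>
        hij (e.map_rel_iff.mp h')
      have badj : ∀ i j : Fin 5, (s(i,j) = s(0,1) ∨ s(i,j) = s(1,2) ∨ s(i,j) = s(0,2) ∨
          s(i,j) = s(0,3) ∨ s(i,j) = s(1,4)) → i ≠ j → bull.Adj i j := by
        intro i j hm hij
        rw [bull, SimpleGraph.fromEdgeSet_adj]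
        exact ⟨by simpa [Set.mem_insert_iff] using hm, hij⟩
      have bnadj : ∀ i j : Fin 5, ¬(s(i,j) = s(0,1) ∨ s(i,j) = s(1,2) ∨ s(i,j) = s(0,2) ∨
          s(i,j) = s(0,3) ∨ s(i,j) = s(1,4)) → ¬bull.Adj i j := by
        intro i j hm h'
        rw [bull, SimpleGraph.fromEdgeSet_adj] at h'
        exact hm (by simpa [Set.mem_insert_iff] using h'.1)
      have h02 : G.Adj (e 0) (e 2) := adj 0 2 (badj 0 2 (by simp) (by decide))
      have h01 : G.Adj (e 0) (e 1) := adj 0 1 (badj 0 1 (by simp) (by decide))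
      have h03 : G.Adj (e 0) (e 3) := adj 0 3 (badj 0 3 (by simp) (by decide))
      have h14 : G.Adj (e 1) (e 4) := adj 1 4 (badj 1 4 (by simp) (by decide))
      have n23 : ¬G.Adj (e 2) (e 3) := nadj 2 3 (bnadj 2 3 (by simp [Sym2.eq_iff]))
      have n24 : ¬G.Adj (e 2) (e 4) := nadj 2 4 (bnadj 2 4 (by simp [Sym2.eq_iff]))
      have n34 : ¬G.Adj (e 3) (e 4) := nadj 3 4 (bnadj 3 4 (by simp [Sym2.eq_iff]))
      exact triple_to_comp h n23 n24 n34
        (e.injective.ne (by decide)) (e.injective.ne (by decide)) (e.injective.ne (by decide))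
        (h02.symm.reachable.trans h03.reachable)
        (h02.symm.reachable.trans (h01.reachable.trans h14.reachable))
    · -- claw : independent set {1, 2, 3}
      have adj : ∀ i j : Fin 4, claw.Adj i j → G.Adj (e i) (e j) := fun i j hij =>
        e.map_rel_iff.mpr hij
      have nadj : ∀ i j : Fin 4, ¬claw.Adj i j → ¬G.Adj (e i) (e j) := fun i j hij h' =>
        hij (e.map_rel_iff.mp h')
      have cadj : ∀ i j : Fin 4, (s(i,j) = s(0,1) ∨ s(i,j) = s(0,2) ∨ s(i,j) = s(0,3)) →
          i ≠ j → claw.Adj i j := by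
        intro i j hm hij
        rw [claw, SimpleGraph.fromEdgeSet_adj]
        exact ⟨by simpa [Set.mem_insert_iff] using hm, hij⟩
      have cnadj : ∀ i j : Fin 4, ¬(s(i,j) = s(0,1) ∨ s(i,j) = s(0,2) ∨ s(i,j) = s(0,3)) →
          ¬claw.Adj i j := by
        intro i j hm h'
        rw [claw, SimpleGraph.fromEdgeSet_adj] at h'
        exact hm (by simpa [Set.mem_insert_iff] using h'.1)
      have h01 : G.Adj (e 0) (e 1) := adj 0 1 (cadj 0 1 (by simp) (by decide))
      have h02 : G.Adj (e 0) (e 2) := adj 0 2 (cadj 0 2 (by simp) (by decide))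
      have h03 : G.Adj (e 0) (e 3) := adj 0 3 (cadj 0 3 (by simp) (by decide))
      have n12 : ¬G.Adj (e 1) (e 2) := nadj 1 2 (cnadj 1 2 (by simp [Sym2.eq_iff]))
      have n13 : ¬G.Adj (e 1) (e 3) := nadj 1 3 (cnadj 1 3 (by simp [Sym2.eq_iff]))
      have n23 : ¬G.Adj (e 2) (e 3) := nadj 2 3 (cnadj 2 3 (by simp [Sym2.eq_iff]))
      exact triple_to_comp h n12 n13 n23
        (e.injective.ne (by decide)) (e.injective.ne (by decide)) (e.injective.ne (by decide))
        (h01.symm.reachable.trans h02.reachable)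
        (h01.symm.reachable.trans h03.reachable)
    · -- P5 : independent set {0, 2, 4}
      have adj : ∀ i j : Fin 5, (SimpleGraph.pathGraph 5).Adj i j → G.Adj (e i) (e j) :=
        fun i j hij => e.map_rel_iff.mpr hij
      have nadj : ∀ i j : Fin 5, ¬(SimpleGraph.pathGraph 5).Adj i j → ¬G.Adj (e i) (e j) :=
        fun i j hij h' => hij (e.map_rel_iff.mp h')
      have h01 : G.Adj (e 0) (e 1) := adj 0 1 (by rw [SimpleGraph.pathGraph_adj]; decide)
      have h12 : G.Adj (e 1) (e 2) := adj 1 2 (by rw [SimpleGraph.pathGraph_adj]; decide)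
      have h23 : G.Adj (e 2) (e 3) := adj 2 3 (by rw [SimpleGraph.pathGraph_adj]; decide)
      have h34 : G.Adj (e 3) (e 4) := adj 3 4 (by rw [SimpleGraph.pathGraph_adj]; decide)
      have n02 : ¬G.Adj (e 0) (e 2) := nadj 0 2 (by rw [SimpleGraph.pathGraph_adj]; decide)
      have n04 : ¬G.Adj (e 0) (e 4) := nadj 0 4 (by rw [SimpleGraph.pathGraph_adj]; decide)
      have n24 : ¬G.Adj (e 2) (e 4) := nadj 2 4 (by rw [SimpleGraph.pathGraph_adj]; decide)
      exact triple_to_comp h n02 n04 n24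
        (e.injective.ne (by decide)) (e.injective.ne (by decide)) (e.injective.ne (by decide))
        (h01.reachable.trans h12.reachable)
        (h01.reachable.trans (h12.reachable.trans (h23.reachable.trans h34.reachable)))
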